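/- The limit lim_{t→∞} P̄(0,t) exists and equals (m+A)/(m+A+mA). -/

import Mathlib

open Finset Filter Topology

lemma dms_pow_ub (m : ℕ) (x : ℝ) (hx0 : 0 ≤ x) (hx1 : x ≤ 1) :
    (1-x)^m ≤ 1 - m*x + (m*x)^2 := by
  induction m with
  | zero => simp
  | succ n ih =>
    have h0 : (0:ℝ) ≤ 1 - x := by linarith
    have hq : (0:ℝ) ≤ 1 - n*x + (n*x)^2 := by nlinarith [sq_nonneg ((n:ℝ)*x - 1)]
    calc (1-x)^(n+1) = (1-x) * (1-x)^n := by ring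
      _ ≤ (1-x) * (1 - n*x + (n*x)^2) := by nlinarith [ih]
      _ ≤ 1 - (n+1:ℕ)*x + ((n+1:ℕ)*x)^2 := by
          push_cast
          nlinarith [mul_nonneg hx0 (sq_nonneg ((n:ℝ)*x))]

lemma dms_pow_lb (m : ℕ) (x : ℝ) (hx1 : x ≤ 1) :
    1 - m*x ≤ (1-x)^m := by
  have := one_add_mul_le_pow (a := -x) (by linarith) m
  exact le_trans (le_of_eq (by ring)) (le_trans this (le_of_eq (by ring)))

lemma div_le_div_of_nonneg_right' {a b c : ℝ} (h : a ≤ b) (hc : 0 < c) : a/c ≤ b/c := by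
  rw [div_le_div_iff₀ hc hc]; nlinarith

lemma dms_aux_tendsto (m : ℕ) (hm : 1 ≤ m) (c L : ℝ) (hc0 : 0 < c) (hc1 : c < 1)
    (hL0 : 0 < L) (hL : L * (1 + m*c) = 1)
    (S : ℕ → ℝ) (hrec : ∀ t : ℕ, 2 ≤ t → S (t+1) = 1 + (1 - c/t)^m * S t) :
    Tendsto (fun t : ℕ => S t / ((t:ℝ)-1)) atTop (nhds L) := by
  have hmc0 : 0 ≤ (m:ℝ)*c := mul_nonneg (Nat.cast_nonneg m) hc0.le
  have hLmc : L + L*((m:ℝ)*c) = 1 := by linear_combination hL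
  have hLmc0 : 0 ≤ L*((m:ℝ)*c) := mul_nonneg hL0.le hmc0
  have hL1 : L ≤ 1 := by linarith
  set M : ℝ := max |S 2 - L*2| ((m*c)^2/c) with hM
  have hM0 : 0 ≤ M := le_trans (abs_nonneg _) (le_max_left _ _)
  have hMC : ((m:ℝ)*c)^2 ≤ c * M := by
    have h1 : ((m:ℝ)*c)^2/c ≤ M := le_max_right _ _
    have h2 : ((m:ℝ)*c)^2 = c * (((m:ℝ)*c)^2/c) := by
      rw [mul_div_cancel₀ _ hc0.ne']
    rw [h2]
    exact mul_le_mul_of_nonneg_left h1 hc0.le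
  have key : ∀ t : ℕ, 2 ≤ t → |S t - L*t| ≤ M := by
    intro t ht
    induction t, ht using Nat.le_induction with
    | base =>
      rw [hM]
      have : ((2:ℕ):ℝ) = 2 := by norm_num
      rw [this]
      exact le_max_left _ _
    | succ t ht ih =>
      have ht2 : (2:ℝ) ≤ (t:ℝ) := by exact_mod_cast ht
      have htpos : (0:ℝ) < t := by linarith
      set x : ℝ := c/t with hx
      have hx0 : 0 < x := div_pos hc0 htpos
      have hx1 : x ≤ 1 := by
        rw [hx, div_le_one htpos]; linarith
      have htx : (t:ℝ) * x = c := by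
        rw [hx, mul_div_cancel₀ _ htpos.ne']
      set p : ℝ := (1-x)^m with hp
      have hp0 : 0 ≤ p := pow_nonneg (by linarith) m
      have hpx : p ≤ 1 - x := by
        calc p ≤ (1-x)^1 := pow_le_pow_of_le_one (by linarith) (by linarith) hm
          _ = 1 - x := pow_one _
      have hlb : 1 - m*x ≤ p := dms_pow_lb m x hx1
      have hub : p ≤ 1 - m*x + (m*x)^2 := dms_pow_ub m x hx0.le hx1
      set B : ℝ := 1 - L*(t+1) + p*(L*t) with hB
      have hdecomp : S (t+1) - L*(t+1) = p*(S t - L*t) + B := by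
        rw [hrec t ht]; ring
      have h2 : (t:ℝ)*((m:ℝ)*x) = (m:ℝ)*c := by rw [← htx]; ring
      have h3 : (t:ℝ)*((m:ℝ)*x)^2 = ((m:ℝ)*c)^2 / t := by
        rw [hx]; field_simp
      have hBe : B = L*((m:ℝ)*c) - L*((t:ℝ)*(1-p)) := by
        have hh : L*((m:ℝ)*c) = 1 - L := by linarith
        rw [hh, hB]; ring
      have hBub : B ≤ ((m:ℝ)*c)^2 / t := by
        have h1' : (m:ℝ)*x - ((m:ℝ)*x)^2 ≤ 1 - p := by linarith
        have h1 : (t:ℝ)*((m:ℝ)*x - ((m:ℝ)*x)^2) ≤ (t:ℝ)*(1-p) :=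
          mul_le_mul_of_nonneg_left h1' htpos.le
        have h1'' : (m:ℝ)*c - ((m:ℝ)*c)^2/t ≤ (t:ℝ)*(1-p) := by
          have : (t:ℝ)*((m:ℝ)*x - ((m:ℝ)*x)^2) = (t:ℝ)*((m:ℝ)*x) - (t:ℝ)*((m:ℝ)*x)^2 := by ring
          rw [this, h2, h3] at h1
          exact h1
        have h4 : L*((m:ℝ)*c - ((m:ℝ)*c)^2/t) ≤ L*((t:ℝ)*(1-p)) :=
          mul_le_mul_of_nonneg_left h1'' hL0.le
        have h4' : L*((m:ℝ)*c) - L*(((m:ℝ)*c)^2/t) ≤ L*((t:ℝ)*(1-p)) := by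
          have : L*((m:ℝ)*c - ((m:ℝ)*c)^2/t) = L*((m:ℝ)*c) - L*(((m:ℝ)*c)^2/t) := by ring
          linarith [h4]
        have hnn : (0:ℝ) ≤ ((m:ℝ)*c)^2/t := by positivity
        have hfrac : L*(((m:ℝ)*c)^2/t) ≤ ((m:ℝ)*c)^2/t :=
          mul_le_of_le_one_left hnn hL1
        rw [hBe]
        linarith
      have hBlb : 0 ≤ B := by
        have h1' : 1 - p ≤ (m:ℝ)*x := by linarith
        have h1 : (t:ℝ)*(1-p) ≤ (t:ℝ)*((m:ℝ)*x) :=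
          mul_le_mul_of_nonneg_left h1' htpos.le
        rw [h2] at h1
        have := mul_le_mul_of_nonneg_left h1 hL0.le
        rw [hBe]
        linarith
      have habs : |S (t+1) - L*(t+1)| ≤ p * |S t - L*t| + ((m:ℝ)*c)^2/t := by
        rw [hdecomp]
        calc |p*(S t - L*t) + B| ≤ |p*(S t - L*t)| + |B| := abs_add_le _ _
          _ = p * |S t - L*t| + |B| := by rw [abs_mul, abs_of_nonneg hp0]
          _ ≤ p * |S t - L*t| + ((m:ℝ)*c)^2/t := by
              rw [abs_of_nonneg hBlb]; linarith
      have step : p * |S t - L*t| + ((m:ℝ)*c)^2/t ≤ M := by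
        have h1 : p * |S t - L*t| ≤ (1-x) * M :=
          mul_le_mul hpx ih (abs_nonneg _) (by linarith)
        have h2' : ((m:ℝ)*c)^2/t ≤ x * M := by
          rw [hx, div_mul_eq_mul_div]
          exact div_le_div_of_nonneg_right' hMC htpos
        nlinarith
      push_cast at habs ⊢
      linarith
  have hbound : ∀ᶠ t : ℕ in atTop, ‖S t / ((t:ℝ)-1) - L‖ ≤ (L + M)/((t:ℝ)-1) := by
    filter_upwards [eventually_ge_atTop 2] with t ht
    have ht2 : (2:ℝ) ≤ (t:ℝ) := by exact_mod_cast ht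
    have htm : (0:ℝ) < (t:ℝ)-1 := by linarith
    have heq : S t / ((t:ℝ)-1) - L = (L + (S t - L*t))/((t:ℝ)-1) := by
      field_simp
      ring
    rw [heq, Real.norm_eq_abs, abs_div, abs_of_pos htm]
    have hnum : |L + (S t - L*t)| ≤ L + M := by
      calc |L + (S t - L*t)| ≤ |L| + |S t - L*t| := abs_add_le _ _
        _ ≤ L + M := by rw [abs_of_pos hL0]; linarith [key t ht]
    exact div_le_div_of_nonneg_right' hnum htm
  have hzero : Tendsto (fun t : ℕ => (L + M)/((t:ℝ)-1)) atTop (nhds 0) := by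
    apply Tendsto.div_atTop tendsto_const_nhds
    exact tendsto_atTop_add_const_right atTop (-1) tendsto_natCast_atTop_atTop
  have hsq := squeeze_zero_norm' hbound hzero
  have h2 := hsq.add (tendsto_const_nhds : Tendsto (fun _ : ℕ => L) atTop (nhds L))
  simpa using h2

/-- the reduced degree distribution at degree 0 converges to
`(m+A)/(m+A+mA)`. -/
theorem dms_reduced_limit_deg_zero
    (m : ℕ) (hm : 1 ≤ m) (A : ℝ) (hA : 0 < A)
    (P : ℕ → ℕ → ℕ → ℝ)
    (hP11 : ∀ q : ℕ, P q 1 1 = if q = m then 1 else 0)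
    (hPii : ∀ q i : ℕ, 2 ≤ i → P q i i = if q = 0 then 1 else 0)
    (hPrec : ∀ q i t : ℕ, 1 ≤ i → i ≤ t →
      P q i (t + 1) = ∑ j ∈ Finset.Icc 0 (min m q),
        (m.choose j : ℝ) * (((q : ℝ) - (j : ℝ) + A) / ((m + A) * t)) ^ j *
          (1 - ((q : ℝ) - (j : ℝ) + A) / ((m + A) * t)) ^ (m - j) * P (q - j) i t)
    (Pbar : ℕ → ℕ → ℝ)
    (hPbar : ∀ q t : ℕ, 2 ≤ t →
      Pbar q t = (1 / ((t : ℝ) - 1)) * ∑ i ∈ Finset.Icc 2 t, P q i t) :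
    Filter.Tendsto (fun t : ℕ => Pbar 0 t) Filter.atTop
      (nhds (((m : ℝ) + A) / ((m : ℝ) + A + (m : ℝ) * A))) := by
  have hmR : (1:ℝ) ≤ (m:ℝ) := by exact_mod_cast hm
  have hmA : (0:ℝ) < (m:ℝ) + A := by linarith
  set c : ℝ := A/((m:ℝ)+A) with hc
  have hc0 : 0 < c := div_pos hA hmA
  have hc1 : c < 1 := by rw [hc, div_lt_one hmA]; linarith
  set L : ℝ := ((m:ℝ)+A)/((m:ℝ)+A+(m:ℝ)*A) with hLdef
  have hmApos : (0:ℝ) < (m:ℝ)*A := mul_pos (by linarith) hA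
  have hden : (0:ℝ) < (m:ℝ)+A+(m:ℝ)*A := by linarith
  have hL0 : 0 < L := div_pos hmA hden
  have hL : L * (1 + m*c) = 1 := by
    rw [hLdef, hc]
    field_simp
  set S : ℕ → ℝ := fun t => ∑ i ∈ Finset.Icc 2 t, P 0 i t with hS
  have hrec : ∀ t : ℕ, 2 ≤ t → S (t+1) = 1 + (1 - c/t)^m * S t := by
    intro t ht
    have htpos : (0:ℝ) < (t:ℝ) := by
      have : 0 < t := by omega
      exact_mod_cast this
    have hstep : ∀ i ∈ Finset.Icc 2 t, P 0 i (t+1) = (1 - c/t)^m * P 0 i t := by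
      intro i hi
      simp only [Finset.mem_Icc] at hi
      have hp := hPrec 0 i t (by omega) hi.2
      rw [hp]
      simp only [Nat.min_zero, Finset.Icc_self, Finset.sum_singleton,
        Nat.choose_zero_right, Nat.cast_zero, Nat.cast_one, pow_zero,
        Nat.sub_zero, tsub_zero]
      have hcc : (0:ℝ) + A = A := zero_add A
      have hcc2 : A/(((m:ℝ)+A)*(t:ℝ)) = c/(t:ℝ) := by
        rw [hc, div_div]
      rw [hcc, hcc2]
      ring
    have hsplit : S (t+1) = (∑ i ∈ Finset.Icc 2 t, P 0 i (t+1)) + P 0 (t+1) (t+1) := by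
      simp only [hS]
      exact Finset.sum_Icc_succ_top (by omega) _
    rw [hsplit, Finset.sum_congr rfl hstep, hPii 0 (t+1) (by omega), ← Finset.mul_sum]
    simp only [hS]
    norm_num
    ring
  have hmain := dms_aux_tendsto m hm c L hc0 hc1 hL0 hL S hrec
  refine hmain.congr' ?_
  filter_upwards [eventually_ge_atTop 2] with t ht
  rw [hPbar 0 t ht]
  simp only [hS]
  rw [one_div, inv_mul_eq_div]
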